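/- Let $C = \mathbb{C}[t]$, $B = \mathbb{C}[t][x,y]$, $B' = \mathbb{C}(t)[x,y]$, $A' = \mathbb{C}(t)[x^2, x^3, x + t y] \subseteq B'$, and $A = B \times_{B'} A' = B \cap A'$. Then the quotient $A/(xB \cap A)$ is isomorphic to $\mathbb{C}[t][t y, t y^2, \ldots, t y^k, \ldots]$, which is not a finitely generated $\mathbb{C}[t]$-algebra; hence $A$ is not a finitely generated $\mathbb{C}[t]$-algebra. -/

import Mathlib

set_option synthInstance.maxHeartbeats 1000000
set_option maxHeartbeats 1000000

open MvPolynomial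

/-- The ring `ℂ[t]`. -/
noncomputable def Rc : Type := Polynomial ℂ

noncomputable instance : CommRing Rc := inferInstanceAs (CommRing (Polynomial ℂ))
noncomputable instance : IsDomain Rc := inferInstanceAs (IsDomain (Polynomial ℂ))

/-- The element `t ∈ ℂ[t]`. -/
noncomputable def tRc : Rc := (Polynomial.X : Polynomial ℂ)

/-- The field `ℂ(t)` of rational functions. -/
noncomputable def Kt : Type := FractionRing Rc

noncomputable instance : Field Kt := inferInstanceAs (Field (FractionRing Rc))
noncomputable instance : Algebra Rc Kt := inferInstanceAs (Algebra Rc (FractionRing Rc))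

/-- The element `t ∈ ℂ(t)`. -/
noncomputable def tK : Kt := algebraMap Rc Kt tRc

/-- The ring `B = ℂ[t][x,y]`. -/
abbrev Bc : Type := MvPolynomial (Fin 2) Rc

/-- The ring `B' = ℂ(t)[x,y]`. -/
abbrev Bt : Type := MvPolynomial (Fin 2) Kt

/-- The inclusion `B = ℂ[t][x,y] → B' = ℂ(t)[x,y]`. -/
noncomputable def iB : Bc →ₐ[Rc] Bt :=
  MvPolynomial.mapAlgHom (Algebra.ofId Rc Kt)


noncomputable instance : IsFractionRing Rc Kt := inferInstanceAs (IsFractionRing Rc (FractionRing Rc))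
instance : CharZero Rc := inferInstanceAs (CharZero (Polynomial ℂ))

lemma tRc_ne_zero : tRc ≠ 0 := Polynomial.X_ne_zero
lemma not_isUnit_tRc : ¬ IsUnit tRc := Polynomial.not_isUnit_X
lemma injK : Function.Injective (algebraMap Rc Kt) := IsFractionRing.injective Rc Kt
lemma tK_ne_zero : tK ≠ 0 := fun h => tRc_ne_zero (injK (h.trans (map_zero _).symm))

noncomputable def phi : Bc →ₐ[Rc] Polynomial Rc := aeval ![0, Polynomial.X]
noncomputable def phiK : Bt →ₐ[Kt] Polynomial Kt := aeval ![0, Polynomial.X]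

example : True := trivial

lemma iB_apply (b : Bc) : iB b = MvPolynomial.map (algebraMap Rc Kt) b := rfl

lemma compat (b : Bc) : phiK (iB b) = (phi b).map (algebraMap Rc Kt) := by
  have h : (phiK : Bt →+* Polynomial Kt).comp (iB : Bc →+* Bt)
      = (Polynomial.mapRingHom (algebraMap Rc Kt)).comp (phi : Bc →+* Polynomial Rc) := by
    apply MvPolynomial.ringHom_ext
    · intro r
      simp [phi, phiK, iB_apply]
    · intro i
      fin_cases i <;> simp [phi, phiK, iB_apply]
  exact RingHom.congr_fun h b

lemma pderiv_iB (b : Bc) : pderiv 0 (iB b) = iB (pderiv 0 b) := by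
  rw [iB_apply, iB_apply, pderiv_map]

lemma aux_algmem (r : Kt) : Polynomial.C tK * phiK (pderiv 0 ((algebraMap Kt Bt) r)) = Polynomial.derivative (phiK ((algebraMap Kt Bt) r)) := by
  have : (algebraMap Kt Bt r) = C r := rfl
  simp [this, phiK]

noncomputable def Sder : Subalgebra Kt Bt where
  carrier := {f | Polynomial.C tK * phiK (pderiv 0 f) = Polynomial.derivative (phiK f)}
  add_mem' := by
    intro a b ha hb
    simp only [Set.mem_setOf_eq, map_add] at *
    rw [mul_add, ha, hb]
  mul_mem' := by
    intro a b ha hb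
    simp only [Set.mem_setOf_eq] at *
    rw [pderiv_mul, map_add, map_mul, map_mul, map_mul, Polynomial.derivative_mul, ← ha, ← hb]
    ring
  one_mem' := by
    simp only [Set.mem_setOf_eq]
    simp
  algebraMap_mem' := fun r => aux_algmem r

lemma gens_mem_Sder :
    ({(X 0 : Bt) ^ 2, (X 0 : Bt) ^ 3, (X 0 : Bt) + C tK * X 1} : Set Bt) ⊆ Sder := by
  intro f hf
  have hx : phiK (X 0) = 0 := by simp [phiK]
  have hy : phiK (X 1) = Polynomial.X := by simp [phiK]
  rcases hf with rfl | rfl | rfl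
  · show Polynomial.C tK * phiK (pderiv 0 ((X 0 : Bt) ^ 2)) = Polynomial.derivative (phiK ((X 0 : Bt)^2))
    rw [pderiv_pow]
    simp [hx]
  · show Polynomial.C tK * phiK (pderiv 0 ((X 0 : Bt) ^ 3)) = Polynomial.derivative (phiK ((X 0 : Bt)^3))
    rw [pderiv_pow]
    simp [hx]
  · show Polynomial.C tK * phiK (pderiv 0 ((X 0 : Bt) + C tK * X 1)) = Polynomial.derivative (phiK ((X 0 : Bt) + C tK * X 1))
    have h1 : pderiv (0 : Fin 2) ((X 0 : Bt) + C tK * X 1) = 1 := by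
      rw [map_add, pderiv_C_mul]
      simp
    rw [h1, map_add, map_mul, map_one, hx, hy]
    have : phiK (C tK) = Polynomial.C tK := by simp [phiK]
    rw [this]
    simp

lemma key_identity {f : Bt}
    (hf : f ∈ Algebra.adjoin Kt {(X 0 : Bt) ^ 2, (X 0 : Bt) ^ 3, (X 0 : Bt) + C tK * X 1}) :
    Polynomial.C tK * phiK (pderiv 0 f) = Polynomial.derivative (phiK f) :=
  Algebra.adjoin_le gens_mem_Sder hf

lemma coeff_phi_dvd {a : Bc}
    (ha : iB a ∈ Algebra.adjoin Kt {(X 0 : Bt) ^ 2, (X 0 : Bt) ^ 3, (X 0 : Bt) + C tK * X 1})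
    (j : ℕ) : tRc ∣ (phi a).coeff (j + 1) := by
  have h0 := key_identity ha
  rw [compat, pderiv_iB, compat, Polynomial.derivative_map] at h0
  have hC : (Polynomial.C tK : Polynomial Kt) = (Polynomial.C tRc).map (algebraMap Rc Kt) := by
    simp [tK]
  rw [hC, ← Polynomial.map_mul] at h0
  have h1 : Polynomial.C tRc * phi (pderiv 0 a) = Polynomial.derivative (phi a) :=
    Polynomial.map_injective _ injK h0
  have h2 := congrArg (fun p => Polynomial.coeff p j) h1
  simp only [Polynomial.coeff_C_mul, Polynomial.coeff_derivative] at h2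
  have hu : IsUnit ((j + 1 : ℕ) : Rc) := by
    show IsUnit ((j + 1 : ℕ) : Polynomial ℂ)
    rw [← Polynomial.C_eq_natCast]
    exact Polynomial.isUnit_C.mpr (isUnit_iff_ne_zero.mpr (Nat.cast_ne_zero.mpr (Nat.succ_ne_zero j)))
  have h3 : tRc ∣ (phi a).coeff (j + 1) * ((j : Rc) + 1) := ⟨_, h2.symm⟩
  have h4 : ((j + 1 : ℕ) : Rc) = ((j : Rc) + 1) := by push_cast; ring
  rw [h4] at hu
  exact (hu.dvd_mul_right).mp h3

/-- generators of T -/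
noncomputable def genT : ℕ → Polynomial Rc := fun k => Polynomial.C tRc * Polynomial.X ^ (k + 1)

lemma mem_T_of_dvd {p : Polynomial Rc} (h : ∀ j, tRc ∣ p.coeff (j + 1)) :
    p ∈ Algebra.adjoin Rc (Set.range genT) := by
  rw [p.as_sum_range]
  apply Subalgebra.sum_mem
  intro i _
  cases i with
  | zero =>
      rw [Polynomial.monomial_zero_left]
      exact Subalgebra.algebraMap_mem _ _
  | succ j =>
      obtain ⟨q, hq⟩ := h j
      rw [← Polynomial.C_mul_X_pow_eq_monomial, hq]
      have : Polynomial.C (tRc * q) * Polynomial.X ^ (j + 1)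
          = Polynomial.C q * (Polynomial.C tRc * Polynomial.X ^ (j + 1)) := by
        rw [map_mul]; ring
      rw [this]
      exact Subalgebra.mul_mem _ (Subalgebra.algebraMap_mem _ _)
        (Algebra.subset_adjoin ⟨j, rfl⟩)

/-- the subalgebra of polynomials with all positive coefficients divisible by t -/
noncomputable def Tp : Subalgebra Rc (Polynomial Rc) where
  carrier := {p | ∀ j, tRc ∣ p.coeff (j + 1)}
  add_mem' := by
    intro a b ha hb j
    rw [Polynomial.coeff_add]
    exact dvd_add (ha j) (hb j)
  mul_mem' := by
    intro a b ha hb j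
    rw [Polynomial.coeff_mul]
    apply Finset.dvd_sum
    rintro ⟨u, v⟩ huv
    rw [Finset.HasAntidiagonal.mem_antidiagonal] at huv
    cases u with
    | zero =>
        have hv : v = j + 1 := by omega
        subst hv
        exact (hb j).mul_left _
    | succ u' =>
        exact (ha u').mul_right _
  one_mem' := by
    intro j
    rw [Polynomial.coeff_one]
    simp
  algebraMap_mem' := by
    intro r j
    have : algebraMap Rc (Polynomial Rc) r = Polynomial.C r := rfl
    rw [this, Polynomial.coeff_C]
    simp

lemma dvd_of_mem_T {p : Polynomial Rc} (h : p ∈ Algebra.adjoin Rc (Set.range genT)) :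
    ∀ j, tRc ∣ p.coeff (j + 1) := by
  have : Algebra.adjoin Rc (Set.range genT) ≤ Tp := by
    apply Algebra.adjoin_le
    rintro _ ⟨k, rfl⟩
    intro j
    rw [genT, Polynomial.coeff_C_mul, Polynomial.coeff_X_pow]
    split <;> simp
  exact this h

lemma t2_not_dvd : ¬ (tRc * tRc ∣ tRc) := by
  intro ⟨c, hc⟩
  have h1 : tRc * 1 = tRc * (tRc * c) := by rw [mul_one, ← mul_assoc]; exact hc
  have h2 : (1 : Rc) = tRc * c := mul_left_cancel₀ tRc_ne_zero h1
  exact not_isUnit_tRc (IsUnit.of_mul_eq_one _ h2.symm)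


lemma coeff_algebraMap_poly (r : Rc) {j : ℕ} (hj : j ≠ 0) :
    (algebraMap Rc (Polynomial Rc) r).coeff j = 0 := by
  rw [Polynomial.algebraMap_eq, Polynomial.coeff_C]
  simp [hj]

noncomputable def Mobs (N : ℕ) : Subalgebra Rc (Polynomial Rc) :=
{ carrier := {p | (∀ j, tRc ∣ p.coeff (j + 1)) ∧ ∀ j, N < j → tRc * tRc ∣ p.coeff j}
  add_mem' := by
    rintro a b ⟨ha1, ha2⟩ ⟨hb1, hb2⟩
    constructor
    · intro j; rw [Polynomial.coeff_add]; exact dvd_add (ha1 j) (hb1 j)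
    · intro j hj; rw [Polynomial.coeff_add]; exact dvd_add (ha2 j hj) (hb2 j hj)
  mul_mem' := by
    rintro a b ⟨ha1, ha2⟩ ⟨hb1, hb2⟩
    constructor
    · intro j
      rw [Polynomial.coeff_mul]
      apply Finset.dvd_sum
      rintro ⟨u, v⟩ huv
      rw [Finset.HasAntidiagonal.mem_antidiagonal] at huv
      cases u with
      | zero =>
          have hv : v = j + 1 := by omega
          subst hv
          exact (hb1 j).mul_left _
      | succ u' => exact (ha1 u').mul_right _
    · intro j hj
      rw [Polynomial.coeff_mul]
      apply Finset.dvd_sum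
      rintro ⟨u, v⟩ huv
      rw [Finset.HasAntidiagonal.mem_antidiagonal] at huv
      cases u with
      | zero =>
          have hv : v = j := by omega
          rw [hv]
          exact (hb2 j hj).mul_left _
      | succ u' =>
          cases v with
          | zero =>
              have hu : u' + 1 = j := by omega
              subst hu
              exact (ha2 _ hj).mul_right _
          | succ v' =>
              exact mul_dvd_mul (ha1 u') (hb1 v')
  one_mem' := by
    constructor
    · intro j; rw [Polynomial.coeff_one]; simp
    · intro j hj
      rw [Polynomial.coeff_one]
      have : j ≠ 0 := by omega
      simp [this]
  algebraMap_mem' := by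
    intro r
    constructor
    · intro j; rw [coeff_algebraMap_poly r (Nat.succ_ne_zero j)]; exact dvd_zero _
    · intro j hj; rw [coeff_algebraMap_poly r (by omega : j ≠ 0)]; exact dvd_zero _ }



lemma adjoin_ne_T (s : Finset (Polynomial Rc)) :
    Algebra.adjoin Rc (s : Set (Polynomial Rc)) ≠ Algebra.adjoin Rc (Set.range genT) := by
  intro h
  set N := s.sup Polynomial.natDegree with hN
  -- the obstruction subalgebra
  have hsM : Algebra.adjoin Rc (s : Set (Polynomial Rc)) ≤ Mobs N := by
    apply Algebra.adjoin_le
    intro g hg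
    constructor
    · exact dvd_of_mem_T (h ▸ Algebra.subset_adjoin hg)
    · intro j hj
      have hdeg : g.natDegree ≤ N := Finset.le_sup hg
      rw [Polynomial.coeff_eq_zero_of_natDegree_lt (by omega)]
      exact dvd_zero _
  have hgen : genT N ∈ Mobs N := hsM (h ▸ Algebra.subset_adjoin ⟨N, rfl⟩)
  have := hgen.2 (N + 1) (by omega)
  rw [genT, Polynomial.coeff_C_mul, Polynomial.coeff_X_pow] at this
  rw [if_pos rfl, mul_one] at this
  exact t2_not_dvd this

noncomputable abbrev AdK : Subalgebra Kt Bt :=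
  Algebra.adjoin Kt {(X 0 : Bt) ^ 2, (X 0 : Bt) ^ 3, (X 0 : Bt) + C tK * X 1}

lemma div_tK_mem {b : Bt} (h : C tK * b ∈ AdK) : b ∈ AdK := by
  have hb : b = C tK⁻¹ * (C tK * b) := by
    rw [← mul_assoc, ← map_mul, inv_mul_cancel₀ tK_ne_zero, map_one, one_mul]
  rw [hb]
  exact Subalgebra.mul_mem _ (by
    have : (C (tK⁻¹) : Bt) = algebraMap Kt Bt tK⁻¹ := rfl
    rw [this]; exact Subalgebra.algebraMap_mem _ _) h

lemma x2x3_mem (m : ℕ) : (X 0 : Bt) ^ 2 * X 1 ^ m ∈ AdK ∧ (X 0 : Bt) ^ 3 * X 1 ^ m ∈ AdK := by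
  induction m with
  | zero =>
      constructor
      · simpa using Algebra.subset_adjoin (by simp : ((X 0 : Bt) ^ 2) ∈ _)
      · simpa using Algebra.subset_adjoin (by simp : ((X 0 : Bt) ^ 3) ∈ _)
  | succ m ih =>
      have hs : ((X 0 : Bt) + C tK * X 1) ∈ AdK := Algebra.subset_adjoin (by simp)
      constructor
      · apply div_tK_mem
        have hid : C tK * ((X 0 : Bt) ^ 2 * X 1 ^ (m + 1))
            = (X 0 ^ 2 * X 1 ^ m) * (X 0 + C tK * X 1) - X 0 ^ 3 * X 1 ^ m := by ring
        rw [hid]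
        exact Subalgebra.sub_mem _ (Subalgebra.mul_mem _ ih.1 hs) ih.2
      · apply div_tK_mem
        have hid : C tK * ((X 0 : Bt) ^ 3 * X 1 ^ (m + 1))
            = (X 0 ^ 3 * X 1 ^ m) * (X 0 + C tK * X 1) - X 0 ^ 2 * (X 0 ^ 2 * X 1 ^ m) := by ring
        rw [hid]
        exact Subalgebra.sub_mem _ (Subalgebra.mul_mem _ ih.2 hs)
          (Subalgebra.mul_mem _ (Algebra.subset_adjoin (by simp)) ih.1)

noncomputable def bct (k : ℕ) : Bt :=
  C tK * X 1 ^ (k + 1) + C ((k + 1 : ℕ) : Kt) * (X 0 * X 1 ^ k)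

lemma bct_mem (k : ℕ) : bct k ∈ AdK := by
  induction k with
  | zero =>
      have h0 : bct 0 = (X 0 : Bt) + C tK * X 1 := by
        rw [bct]
        push_cast
        simp
        ring
      rw [h0]
      exact Algebra.subset_adjoin (by simp)
  | succ k ih =>
      apply div_tK_mem
      have hcast : (((k + 1 : ℕ) + 1 : ℕ) : Kt) = ((k + 1 : ℕ) : Kt) + 1 := by push_cast; ring
      have hid : C tK * bct (k + 1)
          = ((X 0 : Bt) + C tK * X 1) * bct k - C ((k + 1 : ℕ) : Kt) * (X 0 ^ 2 * X 1 ^ k) := by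
        rw [bct, bct, hcast, map_add, map_one]
        ring
      rw [hid]
      exact Subalgebra.sub_mem _
        (Subalgebra.mul_mem _ (Algebra.subset_adjoin (by simp)) ih)
        (Subalgebra.mul_mem _ (by
          have : (C (((k + 1 : ℕ) : Kt)) : Bt) = algebraMap Kt Bt _ := rfl
          rw [this]; exact Subalgebra.algebraMap_mem _ _) (x2x3_mem k).1)

noncomputable def bc (k : ℕ) : Bc :=
  C tRc * X 1 ^ (k + 1) + C ((k + 1 : ℕ) : Rc) * (X 0 * X 1 ^ k)

lemma iB_bc (k : ℕ) : iB (bc k) = bct k := by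
  rw [bc, bct, iB_apply]
  simp only [map_add, map_mul, map_pow, MvPolynomial.map_C, MvPolynomial.map_X]
  norm_num [tK]

lemma phi_bc (k : ℕ) : phi (bc k) = Polynomial.C tRc * Polynomial.X ^ (k + 1) := by
  rw [bc, phi]
  simp only [map_add, map_mul, map_pow, aeval_C, aeval_X]
  simp [Polynomial.algebraMap_eq]

lemma single_char {d : Fin 2 →₀ ℕ} {n : ℕ} :
    d = Finsupp.single 1 n ↔ d 0 = 0 ∧ d 1 = n := by
  constructor
  · rintro rfl
    constructor
    · rw [Finsupp.single_apply]; simp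
    · rw [Finsupp.single_apply]; simp
  · rintro ⟨h0, h1⟩
    ext i
    fin_cases i <;> simp [Finsupp.single_apply, h0, h1]

lemma coeff_phi (b : Bc) (n : ℕ) :
    (phi b).coeff n = coeff (Finsupp.single 1 n) b := by
  induction b using MvPolynomial.induction_on' with
  | add p q hp hq => rw [map_add, Polynomial.coeff_add, hp, hq, MvPolynomial.coeff_add]
  | monomial d c =>
      rw [phi, aeval_monomial, MvPolynomial.coeff_monomial]
      rw [Finsupp.prod_fintype _ _ (fun i => pow_zero _)]
      rw [Fin.prod_univ_two]
      simp only [Matrix.cons_val_zero, Matrix.cons_val_one, Matrix.head_cons]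
      by_cases h0 : d 0 = 0
      · rw [h0, pow_zero, one_mul]
        rw [Polynomial.algebraMap_eq, Polynomial.coeff_C_mul, Polynomial.coeff_X_pow]
        by_cases h1 : d 1 = n
        · rw [if_pos h1.symm, if_pos (single_char.mpr ⟨h0, h1⟩), mul_one]
        · rw [if_neg (fun h => h1 h.symm), if_neg (fun h => h1 (single_char.mp h).2), mul_zero]
      · rw [zero_pow h0, zero_mul, mul_zero, Polynomial.coeff_zero]
        rw [if_neg (fun h => h0 (single_char.mp h).1)]

lemma phi_eq_zero_iff (b : Bc) : phi b = 0 ↔ b ∈ Ideal.span {(X 0 : Bc)} := by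
  have hspan : Ideal.span {(X 0 : Bc)} = Ideal.span (MvPolynomial.X '' ({0} : Set (Fin 2))) := by
    rw [Set.image_singleton]
  rw [hspan]
  rw [MvPolynomial.mem_ideal_span_X_image]
  constructor
  · intro h m hm
    refine ⟨0, Set.mem_singleton _, ?_⟩
    intro h0
    have hc : coeff (Finsupp.single 1 (m 1)) b ≠ 0 := by
      have : m = Finsupp.single 1 (m 1) := single_char.mpr ⟨h0, rfl⟩
      rw [← this]
      exact MvPolynomial.mem_support_iff.mp hm
    rw [← coeff_phi, h, Polynomial.coeff_zero] at hc
    exact hc rfl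
  · intro h
    ext n
    rw [coeff_phi, Polynomial.coeff_zero]
    by_contra hc
    obtain ⟨i, hi, hne⟩ := h _ (MvPolynomial.mem_support_iff.mpr hc)
    rcases Set.mem_singleton_iff.mp hi with rfl
    rw [Finsupp.single_apply] at hne
    simp at hne


/-- With `B = ℂ[t][x,y]`, `B' = ℂ(t)[x,y]`, `A' = ℂ(t)[x², x³, x + t·y] ⊆ B'` and
`A = B ∩ A'` (the fiber product `B ×_{B'} A'`), the quotient `A/(xB ∩ A)` is isomorphic
as a `ℂ[t]`-algebra to `ℂ[t][t·y, t·y², …, t·yᵏ, …]`, which is not a finitely generated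
`ℂ[t]`-algebra; hence `A` is not a finitely generated `ℂ[t]`-algebra. -/
theorem stmt_16 (A' : Subalgebra Kt Bt)
    (hA' : A' = Algebra.adjoin Kt {(X 0 : Bt) ^ 2, (X 0 : Bt) ^ 3, (X 0 : Bt) + C tK * X 1})
    (A : Subalgebra Rc Bc)
    (hA : A = Subalgebra.comap iB (A'.restrictScalars Rc))
    (I : Ideal ↥A)
    (hI : I = Ideal.comap A.val.toRingHom (Ideal.span {(X 0 : Bc)}))
    (T : Subalgebra Rc (Polynomial Rc))
    (hT : T = Algebra.adjoin Rc
      (Set.range fun k : ℕ => Polynomial.C tRc * Polynomial.X ^ (k + 1))) :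
    Nonempty ((↥A ⧸ I) ≃ₐ[Rc] ↥T) ∧
    ¬ Algebra.FiniteType Rc ↥T ∧
    ¬ Algebra.FiniteType Rc ↥A := by
  have hrange : (Set.range fun k : ℕ => Polynomial.C tRc * Polynomial.X ^ (k + 1))
      = Set.range genT := rfl
  have hTa : T = Algebra.adjoin Rc (Set.range genT) := by rw [hT, hrange]
  have hmemA : ∀ a : ↥A, iB (a : Bc) ∈ AdK := by
    rintro ⟨x, hx⟩
    rw [hA] at hx
    have hx2 : iB x ∈ A'.restrictScalars Rc := (Subalgebra.mem_comap _ _ _).mp hx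
    have hx3 : iB x ∈ A' := hx2
    rwa [hA'] at hx3
  set f : ↥A →ₐ[Rc] Polynomial Rc := phi.comp A.val with hf
  have hfT : ∀ a : ↥A, f a ∈ T := by
    intro a
    rw [hTa]
    exact mem_T_of_dvd (fun j => coeff_phi_dvd (hmemA a) j)
  set fT : ↥A →ₐ[Rc] ↥T := f.codRestrict T hfT with hfT'
  have hsurj : Function.Surjective fT := by
    rintro ⟨y, hy⟩
    have hle : T ≤ f.range := by
      rw [hTa]
      apply Algebra.adjoin_le
      rintro _ ⟨k, rfl⟩
      have hbcA : bc k ∈ A := by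
        rw [hA]
        apply (Subalgebra.mem_comap _ _ _).mpr
        have h3 : iB (bc k) ∈ A' := by rw [hA', iB_bc]; exact bct_mem k
        exact h3
      exact ⟨⟨bc k, hbcA⟩, phi_bc k⟩
    obtain ⟨a, ha⟩ := hle hy
    exact ⟨a, Subtype.ext ha⟩
  have hker : I = RingHom.ker fT := by
    ext a
    rw [hI, Ideal.mem_comap, RingHom.mem_ker]
    have hco : (fT a : Polynomial Rc) = phi (a : Bc) := rfl
    have hmem : (A.val.toRingHom a) ∈ Ideal.span {(X 0 : Bc)} ↔ phi ((a : Bc)) = 0 :=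
      (phi_eq_zero_iff _).symm
    rw [hmem]
    constructor
    · intro h
      exact Subtype.ext (hco.trans h)
    · intro h
      exact hco.symm.trans (congrArg Subtype.val h)
  have e : (↥A ⧸ I) ≃ₐ[Rc] ↥T := by
    rw [hker]
    exact Ideal.quotientKerAlgEquivOfSurjective hsurj
  have hnotT : ¬ Algebra.FiniteType Rc ↥T := by
    intro hft
    have hFG : T.FG := (Subalgebra.fg_top T).mp hft.out
    obtain ⟨s, hs⟩ := hFG
    exact adjoin_ne_T s (hs.trans hTa)
  refine ⟨⟨e⟩, hnotT, ?_⟩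
  intro hAft
  have h1 : Algebra.FiniteType Rc (↥A ⧸ I) :=
    by haveI := hAft; exact Algebra.FiniteType.of_surjective (Ideal.Quotient.mkₐ Rc I) (Ideal.Quotient.mkₐ_surjective Rc I)
  have h2 : Algebra.FiniteType Rc ↥T :=
    Algebra.FiniteType.of_surjective e.toAlgHom e.surjective
  exact hnotT h2
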